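/- Set β = β₀ = μ/ρ(R), and let u ∈ ℝ^n be a nonzero vector with nonnegative entries satisfying R·u = ρ(R)·u. Then the transcritical transversality quantity is strictly negative: ∑_{i=1}^n ∑_{j=1}^n ∑_{k=1}^n u_k u_i u_j · ∂²F_k/∂x_i∂x_j (0) < 0. -/

import Mathlib

open Filter Finset

/-- The MMCA map `F`. -/
noncomputable def F {n : ℕ} (R : Matrix (Fin n) (Fin n) ℝ) (β μ : ℝ) (x : Fin n → ℝ) :
    Fin n → ℝ :=
  fun i => 1 - (1 - (1 - μ) * x i) * ∏ j, (1 - β * R i j * x j)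

/-- Irreducibility of a (nonnegative) square matrix. -/
def MatIrred {n : ℕ} (R : Matrix (Fin n) (Fin n) ℝ) : Prop :=
  ∀ i j : Fin n, ∃ k : ℕ, 0 < k ∧ (R ^ k) i j ≠ 0

/-- Spectral radius of a real matrix, as the supremum of the absolute values of the
real spectrum (appropriate here since `R` is symmetric). -/
noncomputable def specRad {n : ℕ} (R : Matrix (Fin n) (Fin n) ℝ) : ℝ :=
  sSup {r : ℝ | ∃ z ∈ spectrum ℝ R, |z| = r}

/-! ### Auxiliary calculus lemmas -/

lemma prodD (n : ℕ) (s : Finset (Fin n)) (a : Fin n → ℝ) (y : Fin n → ℝ) :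
    HasFDerivAt (fun z : Fin n → ℝ => ∏ l ∈ s, (1 - a l * z l))
      (∑ l ∈ s, (∏ m ∈ s.erase l, (1 - a m * y m)) •
        (-(a l • (ContinuousLinearMap.proj l : (Fin n → ℝ) →L[ℝ] ℝ)))) y := by
  exact HasFDerivAt.finset_prod (u := s)
    (g := fun l (z : Fin n → ℝ) => 1 - a l * z l)
    (g' := fun l => -(a l • (ContinuousLinearMap.proj l : (Fin n → ℝ) →L[ℝ] ℝ)))
    (fun l _ => ((ContinuousLinearMap.proj l : (Fin n → ℝ) →L[ℝ] ℝ).hasFDerivAt.const_mul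
      (a l)).const_sub 1)

lemma FkD {n : ℕ} (R : Matrix (Fin n) (Fin n) ℝ) (β μ : ℝ) (k : Fin n) (y : Fin n → ℝ) :
    HasFDerivAt (fun z => F R β μ z k)
      (-(((1 - (1 - μ) * y k) •
            ∑ l : Fin n, (∏ m ∈ Finset.univ.erase l, (1 - β * R k m * y m)) •
              (-((β * R k l) • (ContinuousLinearMap.proj l : (Fin n → ℝ) →L[ℝ] ℝ))))
         + (∏ j, (1 - β * R k j * y j)) •
            (-((1 - μ) • (ContinuousLinearMap.proj k : (Fin n → ℝ) →L[ℝ] ℝ))))) y := by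
  have hP := prodD n Finset.univ (fun l => β * R k l) y
  have hA : HasFDerivAt (fun z : Fin n → ℝ => 1 - (1 - μ) * z k)
      (-((1 - μ) • (ContinuousLinearMap.proj k : (Fin n → ℝ) →L[ℝ] ℝ))) y :=
    ((ContinuousLinearMap.proj k : (Fin n → ℝ) →L[ℝ] ℝ).hasFDerivAt.const_mul (1 - μ)).const_sub 1
  exact (hA.mul hP).const_sub 1

lemma FkD_apply {n : ℕ} (R : Matrix (Fin n) (Fin n) ℝ) (β μ : ℝ) (k j : Fin n) (y : Fin n → ℝ) :
    fderiv ℝ (fun z => F R β μ z k) y (Pi.single j 1)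
      = (1 - (1 - μ) * y k) * ((β * R k j) * ∏ m ∈ Finset.univ.erase j, (1 - β * R k m * y m))
        + (1 - μ) * (if j = k then 1 else 0) * ∏ m, (1 - β * R k m * y m) := by
  rw [(FkD R β μ k y).fderiv]
  simp only [ContinuousLinearMap.neg_apply, ContinuousLinearMap.add_apply,
    ContinuousLinearMap.smul_apply, ContinuousLinearMap.sum_apply,
    ContinuousLinearMap.proj_apply, smul_eq_mul, Pi.single_apply]
  rw [Finset.sum_eq_single j]
  · by_cases h : j = k
    · simp [h]; ring
    · simp [h, Ne.symm h]; left; ring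
  · intro b _ hb; simp [hb]
  · simp

lemma FkD2 {n : ℕ} (R : Matrix (Fin n) (Fin n) ℝ) (β μ : ℝ) (k j i : Fin n) :
    fderiv ℝ (fun y => fderiv ℝ (fun z => F R β μ z k) y (Pi.single j 1)) 0 (Pi.single i 1)
    = -((1 - μ) * (β * R k j) * (if i = k then 1 else 0)
        + (β * R k j) * (β * R k i) * (if i = j then 0 else 1)
        + (1 - μ) * (if j = k then 1 else 0) * (β * R k i)) := by
  have hfun : (fun y => fderiv ℝ (fun z => F R β μ z k) y (Pi.single j 1))
      = fun y => (1 - (1 - μ) * y k) *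
            ((β * R k j) * ∏ m ∈ Finset.univ.erase j, (1 - β * R k m * y m))
          + (1 - μ) * (if j = k then 1 else 0) * ∏ m, (1 - β * R k m * y m) :=
    funext (FkD_apply R β μ k j)
  rw [hfun]
  have hQ := prodD n (Finset.univ.erase j) (fun l => β * R k l) 0
  have hP := prodD n Finset.univ (fun l => β * R k l) 0
  have hA : HasFDerivAt (fun z : Fin n → ℝ => 1 - (1 - μ) * z k)
      (-((1 - μ) • (ContinuousLinearMap.proj k : (Fin n → ℝ) →L[ℝ] ℝ))) 0 :=
    ((ContinuousLinearMap.proj k : (Fin n → ℝ) →L[ℝ] ℝ).hasFDerivAt.const_mul (1 - μ)).const_sub 1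
  have hg := (hA.mul (hQ.const_mul (β * R k j))).add
    (hP.const_mul ((1 - μ) * (if j = k then 1 else 0)))
  erw [hg.fderiv]
  simp only [ContinuousLinearMap.add_apply, ContinuousLinearMap.smul_apply,
    ContinuousLinearMap.neg_apply, ContinuousLinearMap.sum_apply,
    ContinuousLinearMap.proj_apply, smul_eq_mul, Pi.single_apply, Pi.zero_apply,
    mul_zero, sub_zero, Finset.prod_const_one, one_smul, mul_one]
  have key : ∀ (s : Finset (Fin n)) (c : Fin n → ℝ),
      (∑ l ∈ s, -(c l * if l = i then 1 else 0)) = if i ∈ s then -(c i) else 0 := by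
    intro s c
    rw [← Finset.sum_ite_eq' s i (fun l => -(c l))]
    exact Finset.sum_congr rfl (fun l _ => by by_cases h : l = i <;> simp [h])
  rw [key, key]
  by_cases h1 : i = j <;> by_cases h2 : i = k <;> by_cases h3 : j = k <;>
      simp [h1, h2, h3, @eq_comm (Fin n) k, Finset.mem_erase] <;> ring

/-! ### Auxiliary Perron-type facts -/

lemma hmv_of {n : ℕ} (R : Matrix (Fin n) (Fin n) ℝ) (u : Fin n → ℝ)
    (hev : R.mulVec u = specRad R • u) :
    ∀ k, ∑ j, R k j * u j = specRad R * u k := fun k => by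
  have := congrFun hev k
  simpa [Matrix.mulVec, dotProduct] using this

lemma specRad_pos {n : ℕ} (R : Matrix (Fin n) (Fin n) ℝ) (u : Fin n → ℝ)
    (hR : ∀ i j, R i j ∈ Set.Icc (0:ℝ) 1) (hirr : MatIrred R)
    (hupos : ∀ i, 0 ≤ u i) (k0 : Fin n) (hk0 : 0 < u k0)
    (hev : R.mulVec u = specRad R • u) : 0 < specRad R := by
  have hmv := hmv_of R u hev
  have hnn : 0 ≤ specRad R := by
    have h1 : 0 ≤ ∑ j, R k0 j * u j :=
      Finset.sum_nonneg fun j _ => mul_nonneg (hR k0 j).1 (hupos j)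
    rw [hmv k0] at h1
    nlinarith
  rcases hnn.lt_or_eq with h | h
  · exact h
  exfalso
  have hcol : ∀ k, R k k0 = 0 := by
    intro k
    have hz : ∑ j, R k j * u j = 0 := by rw [hmv k, ← h]; ring
    have := (Finset.sum_eq_zero_iff_of_nonneg
      (fun j _ => mul_nonneg (hR k j).1 (hupos j))).mp hz k0 (Finset.mem_univ _)
    rcases mul_eq_zero.mp this with h' | h'
    · exact h'
    · exact absurd h' (ne_of_gt hk0)
  have hpow : ∀ m : ℕ, 0 < m → ∀ i, (R ^ m) i k0 = 0 := by
    intro m hm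
    induction m with
    | zero => omega
    | succ m ih =>
      intro i
      rcases Nat.eq_zero_or_pos m with hm0 | hm0
      · subst hm0; simpa using hcol i
      · rw [pow_succ, Matrix.mul_apply]
        exact Finset.sum_eq_zero fun l _ => by rw [hcol l, mul_zero]
  obtain ⟨m, hm, hne⟩ := hirr k0 k0
  exact hne (hpow m hm k0)

lemma Rle_of {n : ℕ} (R : Matrix (Fin n) (Fin n) ℝ) (u : Fin n → ℝ)
    (hR : ∀ i j, R i j ∈ Set.Icc (0:ℝ) 1) (hsymm : R.IsSymm)
    (hupos : ∀ i, 0 ≤ u i) (hev : R.mulVec u = specRad R • u)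
    (hρ : 0 < specRad R) {k : Fin n} (hk : 0 < u k) (i : Fin n) :
    R k i ≤ specRad R := by
  have hmv := hmv_of R u hev
  set ρ := specRad R
  have e1 : ρ * (ρ * u k) = ∑ j, R k j * (∑ l, R j l * u l) := by
    rw [← hmv k, Finset.mul_sum]
    exact Finset.sum_congr rfl fun j _ => by rw [hmv j]; ring
  have e2 : R k i * (∑ l, R i l * u l) ≤ ∑ j, R k j * (∑ l, R j l * u l) := by
    apply Finset.single_le_sum (f := fun j => R k j * (∑ l, R j l * u l))
      (fun j _ => mul_nonneg (hR k j).1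
        (Finset.sum_nonneg fun l _ => mul_nonneg (hR j l).1 (hupos l)))
      (Finset.mem_univ i)
  have e3 : R k i * (R i k * u k) ≤ R k i * (∑ l, R i l * u l) := by
    apply mul_le_mul_of_nonneg_left _ (hR k i).1
    exact Finset.single_le_sum (f := fun l => R i l * u l)
      (fun l _ => mul_nonneg (hR i l).1 (hupos l)) (Finset.mem_univ k)
  have hik : R i k = R k i := hsymm.apply k i
  rw [hik] at e3
  have key : R k i * (R k i * u k) ≤ ρ * (ρ * u k) := by
    rw [e1]; exact le_trans e3 e2
  by_contra hc
  push_neg at hc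
  have h1 : 0 < (R k i - ρ) * (R k i + ρ) * u k :=
    mul_pos (mul_pos (sub_pos.mpr hc) (by linarith [(hR k i).1])) hk
  nlinarith [key]

/-- Collapsing a Kronecker-delta sum. -/
lemma collapse {n : ℕ} (i : Fin n) (c : Fin n → ℝ) :
    ∑ k, c k * (if i = k then 1 else 0) = c i := by
  rw [Finset.sum_eq_single i]
  · simp
  · intro b _ hb; simp [Ne.symm hb]
  · intro h; exact absurd (Finset.mem_univ i) h

theorem transversality_negative (n : ℕ) (hn : 2 ≤ n) (R : Matrix (Fin n) (Fin n) ℝ)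
    (hsymm : R.IsSymm) (hR : ∀ i j, R i j ∈ Set.Icc (0:ℝ) 1)
    (hdiag : ∀ i, R i i = 0) (hirr : MatIrred R)
    (μ : ℝ) (hμ : μ ∈ Set.Ioo (0:ℝ) 1)
    (u : Fin n → ℝ) (hu0 : u ≠ 0) (hupos : ∀ i, 0 ≤ u i)
    (hev : R.mulVec u = specRad R • u) :
    ∑ i, ∑ j, ∑ k, u k * u i * u j *
      fderiv ℝ
        (fun y => fderiv ℝ (fun z => F R (μ / specRad R) μ z k) y (Pi.single j 1))
        0 (Pi.single i 1) < 0 := by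
  obtain ⟨k0, hk0ne⟩ := Function.ne_iff.mp hu0
  have hk0 : 0 < u k0 := (hupos k0).lt_of_ne (by simpa [eq_comm] using hk0ne)
  have hρ : 0 < specRad R := specRad_pos R u hR hirr hupos k0 hk0 hev
  have hmv := hmv_of R u hev
  set ρ := specRad R with hρdef
  set β := μ / ρ with hβdef
  have hβρ : β * ρ = μ := div_mul_cancel₀ μ (ne_of_gt hρ)
  have hβnn : 0 ≤ β := div_nonneg hμ.1.le hρ.le
  have hmv' : ∀ i, ∑ k, R k i * u k = ρ * u i := by
    intro i
    rw [show (∑ k, R k i * u k) = ∑ k, R i k * u k from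
      Finset.sum_congr rfl fun k _ => by rw [hsymm.apply i k]]
    exact hmv i
  have hcube : (0:ℝ) < ∑ l, u l ^ 3 :=
    Finset.sum_pos' (fun l _ => pow_nonneg (hupos l) 3)
      ⟨k0, Finset.mem_univ _, by positivity⟩
  simp only [FkD2]
  -- expand the inner bracket
  have expand : ∀ i j k : Fin n, u k * u i * u j *
      -((1 - μ) * (β * R k j) * (if i = k then 1 else 0)
        + (β * R k j) * (β * R k i) * (if i = j then 0 else 1)
        + (1 - μ) * (if j = k then 1 else 0) * (β * R k i))
    = -(u k * u i * u j * ((1 - μ) * (β * R k j) * (if i = k then 1 else 0)))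
      - (u k * u i * u j * ((β * R k j) * (β * R k i))
          - u k * u i * u j * ((β * R k j) * (β * R k i)) * (if i = j then 1 else 0))
      - u k * u i * u j * ((1 - μ) * (if j = k then 1 else 0) * (β * R k i)) := by
    intro i j k
    by_cases h : i = j <;> by_cases h2 : i = k <;> by_cases h3 : j = k <;>
      simp [h, h2, h3, @eq_comm (Fin n) k, @eq_comm (Fin n) j] <;> ring
  calc (∑ i, ∑ j, ∑ k, u k * u i * u j *
      -((1 - μ) * (β * R k j) * (if i = k then 1 else 0)
        + (β * R k j) * (β * R k i) * (if i = j then 0 else 1)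
        + (1 - μ) * (if j = k then 1 else 0) * (β * R k i)))
      = -(∑ i, ∑ j, ∑ k, u k * u i * u j * ((1 - μ) * (β * R k j) * (if i = k then 1 else 0)))
        - ((∑ i, ∑ j, ∑ k, u k * u i * u j * ((β * R k j) * (β * R k i)))
            - ∑ i, ∑ j, ∑ k, u k * u i * u j * ((β * R k j) * (β * R k i))
                * (if i = j then 1 else 0))
        - ∑ i, ∑ j, ∑ k, u k * u i * u j * ((1 - μ) * (if j = k then 1 else 0) * (β * R k i)) := by
        simp only [expand, Finset.sum_sub_distrib, Finset.sum_neg_distrib]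
    _ < 0 := by
        -- S1
        have hS1 : (∑ i, ∑ j, ∑ k, u k * u i * u j *
            ((1 - μ) * (β * R k j) * (if i = k then 1 else 0)))
            = (1 - μ) * μ * ∑ l, u l ^ 3 := by
          have h1 : ∀ i : Fin n, (∑ j, ∑ k, u k * u i * u j *
              ((1 - μ) * (β * R k j) * (if i = k then 1 else 0)))
              = (1 - μ) * μ * u i ^ 3 := by
            intro i
            have h2 : ∀ j : Fin n, (∑ k, u k * u i * u j *
                ((1 - μ) * (β * R k j) * (if i = k then 1 else 0)))
                = (1 - μ) * β * (u i * u i) * (R i j * u j) := by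
              intro j
              rw [show (∑ k, u k * u i * u j *
                  ((1 - μ) * (β * R k j) * (if i = k then 1 else 0)))
                = ∑ k, (u k * u i * u j * ((1 - μ) * (β * R k j))) * (if i = k then 1 else 0)
                from Finset.sum_congr rfl fun k _ => by ring, collapse]
              ring
            rw [Finset.sum_congr rfl fun j _ => h2 j, ← Finset.mul_sum, hmv i, ← hβρ]
            ring
          rw [Finset.sum_congr rfl fun i _ => h1 i, ← Finset.mul_sum]
        -- S3
        have hS3 : (∑ i, ∑ j, ∑ k, u k * u i * u j *
            ((1 - μ) * (if j = k then 1 else 0) * (β * R k i)))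
            = (1 - μ) * μ * ∑ l, u l ^ 3 := by
          have h1 : ∀ i j : Fin n, (∑ k, u k * u i * u j *
              ((1 - μ) * (if j = k then 1 else 0) * (β * R k i)))
              = (1 - μ) * β * (u j * u j) * (R j i * u i) := by
            intro i j
            rw [show (∑ k, u k * u i * u j *
                ((1 - μ) * (if j = k then 1 else 0) * (β * R k i)))
              = ∑ k, (u k * u i * u j * ((1 - μ) * (β * R k i))) * (if j = k then 1 else 0)
              from Finset.sum_congr rfl fun k _ => by ring, collapse]
            ring
          rw [Finset.sum_congr rfl fun i _ => Finset.sum_congr rfl fun j _ => h1 i j,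
            Finset.sum_comm]
          have h2 : ∀ j : Fin n, (∑ i, (1 - μ) * β * (u j * u j) * (R j i * u i))
              = (1 - μ) * μ * u j ^ 3 := by
            intro j
            rw [← Finset.mul_sum, hmv j, ← hβρ]; ring
          rw [Finset.sum_congr rfl fun j _ => h2 j, ← Finset.mul_sum]
        -- S2a
        have hS2a : (∑ i, ∑ j, ∑ k, u k * u i * u j * ((β * R k j) * (β * R k i)))
            = μ ^ 2 * ∑ l, u l ^ 3 := by
          have h1 : ∀ i j : Fin n, (∑ k, u k * u i * u j * ((β * R k j) * (β * R k i)))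
              = ∑ k, (β * β * u k) * (R k i * u i) * (R k j * u j) :=
            fun i j => Finset.sum_congr rfl fun k _ => by ring
          rw [Finset.sum_congr rfl fun i _ => Finset.sum_congr rfl fun j _ => h1 i j]
          rw [Finset.sum_congr rfl fun i _ => Finset.sum_comm, Finset.sum_comm]
          have h2 : ∀ k : Fin n, (∑ i, ∑ j, (β * β * u k) * (R k i * u i) * (R k j * u j))
              = μ ^ 2 * u k ^ 3 := by
            intro k
            have h3 : ∀ i : Fin n, (∑ j, (β * β * u k) * (R k i * u i) * (R k j * u j))
                = ((β * β * u k) * (ρ * u k)) * (R k i * u i) := by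
              intro i
              rw [show (∑ j, (β * β * u k) * (R k i * u i) * (R k j * u j))
                = ((β * β * u k) * (R k i * u i)) * ∑ j, R k j * u j from by
                  rw [Finset.mul_sum],
                hmv k]
              ring
            rw [Finset.sum_congr rfl fun i _ => h3 i, ← Finset.mul_sum, hmv k, ← hβρ]
            ring
          rw [Finset.sum_congr rfl fun k _ => h2 k, ← Finset.mul_sum]
        -- S2b (diagonal part), bounded above
        have hS2b : (∑ i, ∑ j, ∑ k, u k * u i * u j * ((β * R k j) * (β * R k i))
              * (if i = j then 1 else 0))
            ≤ μ ^ 2 * ∑ l, u l ^ 3 := by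
          have h1 : ∀ i : Fin n, (∑ j, ∑ k, u k * u i * u j * ((β * R k j) * (β * R k i))
                * (if i = j then 1 else 0))
              = ∑ k, u k * u i * u i * ((β * R k i) * (β * R k i)) := by
            intro i
            rw [Finset.sum_eq_single i
              (fun b _ hb => Finset.sum_eq_zero fun k _ => by simp [Ne.symm hb])
              (fun h => absurd (Finset.mem_univ i) h)]
            simp
          rw [Finset.sum_congr rfl fun i _ => h1 i]
          have step : ∀ i k : Fin n, u k * u i * u i * ((β * R k i) * (β * R k i))
              ≤ μ * β * (R k i * u k) * (u i * u i) := by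
            intro i k
            rcases (hupos k).eq_or_lt with h0 | h0
            · rw [← h0]; nlinarith
            · have hr : β * R k i ≤ μ := by
                calc β * R k i ≤ β * ρ :=
                      mul_le_mul_of_nonneg_left (Rle_of R u hR hsymm hupos hev hρ h0 i) hβnn
                  _ = μ := hβρ
              have h1 : 0 ≤ β * R k i := mul_nonneg hβnn (hR k i).1
              have h2 : (β * R k i) * (β * R k i) ≤ μ * (β * R k i) :=
                mul_le_mul_of_nonneg_right hr h1
              nlinarith [mul_le_mul_of_nonneg_left h2
                (mul_nonneg (hupos k) (mul_nonneg (hupos i) (hupos i)))]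
          calc (∑ i, ∑ k, u k * u i * u i * ((β * R k i) * (β * R k i)))
              ≤ ∑ i, ∑ k, μ * β * (R k i * u k) * (u i * u i) :=
                Finset.sum_le_sum fun i _ => Finset.sum_le_sum fun k _ => step i k
            _ = μ ^ 2 * ∑ l, u l ^ 3 := by
                have h3 : ∀ i : Fin n, (∑ k, μ * β * (R k i * u k) * (u i * u i))
                    = μ ^ 2 * u i ^ 3 := by
                  intro i
                  rw [show (∑ k, μ * β * (R k i * u k) * (u i * u i))
                    = (μ * β * (u i * u i)) * ∑ k, R k i * u k from by
                      rw [Finset.mul_sum]; exact Finset.sum_congr rfl fun k _ => by ring,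
                    hmv' i, ← hβρ]
                  ring
                rw [Finset.sum_congr rfl fun i _ => h3 i, ← Finset.mul_sum]
        rw [hS1, hS2a, hS3]
        have hpos : 0 < (1 - μ) * μ * ∑ l, u l ^ 3 :=
          mul_pos (mul_pos (by linarith [hμ.2]) hμ.1) hcube
        linarith [hS2b]
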